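/- Suppose the channel covariance matrices factor as Λ = Λ̃ ⊗ I_{N/A} with Λ̃ ∈ ℂ^{A×A} diagonal PSD, and Φ_N = Σ_m X_m ⊗ (Λ̃_m ⊗ I_{N/A}) + σ² I. Then for any x ∈ ℂ^B and diagonal D ∈ ℂ^{B×B}: tr((x^H D ⊗ (Λ̃ ⊗ I_{N/A})) Φ_N^{-1} (D^H x ⊗ (Λ̃ ⊗ I_{N/A}))) = (N/A) · tr((x^H D ⊗ Λ̃) Φ̃^{-1} (D^H x ⊗ Λ̃)), where Φ̃ = Σ_m X_m ⊗ Λ̃_m + σ² I_{AB}. -/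

import Mathlib

open Matrix Kronecker
open scoped ComplexOrder

/-- The row vector `x^H` as a `1 × B` matrix. -/
def rowVecH {B : ℕ} (x : Fin B → ℂ) : Matrix (Fin 1) (Fin B) ℂ :=
  Matrix.of fun _ b => star (x b)

/-- The column vector `x` as a `B × 1` matrix. -/
def colVec {B : ℕ} (x : Fin B → ℂ) : Matrix (Fin B) (Fin 1) ℂ :=
  Matrix.of fun b _ => x b

lemma kron_conjTranspose' {m n p q : Type*} (P : Matrix m n ℂ) (Q : Matrix p q ℂ) :
    (P ⊗ₖ Q)ᴴ = Pᴴ ⊗ₖ Qᴴ := by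
  ext ⟨a, b⟩ ⟨c, d⟩
  simp [conjTranspose_apply, star_mul']

lemma psd_kron' {m p : Type*} [Fintype m] [Fintype p] [DecidableEq m] [DecidableEq p]
    {P : Matrix m m ℂ} {Q : Matrix p p ℂ} (hP : P.PosSemidef) (hQ : Q.PosSemidef) :
    (P ⊗ₖ Q).PosSemidef := by
  open scoped MatrixOrder in
  obtain ⟨C, rfl⟩ := CStarAlgebra.nonneg_iff_eq_star_mul_self.mp hP.nonneg
  open scoped MatrixOrder in
  obtain ⟨E, rfl⟩ := CStarAlgebra.nonneg_iff_eq_star_mul_self.mp hQ.nonneg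
  rw [star_eq_conjTranspose, star_eq_conjTranspose]
  rw [Matrix.mul_kronecker_mul, ← kron_conjTranspose']
  exact Matrix.posSemidef_conjTranspose_mul_self _

lemma kron_one_assoc {A K : ℕ} {ι κ : Type*} (U : Matrix ι κ ℂ)
    (Λ : Matrix (Fin A) (Fin A) ℂ) :
    U ⊗ₖ (Λ ⊗ₖ (1 : Matrix (Fin K) (Fin K) ℂ))
      = ((U ⊗ₖ Λ) ⊗ₖ (1 : Matrix (Fin K) (Fin K) ℂ)).submatrix
          (Equiv.prodAssoc ι (Fin A) (Fin K)).symm (Equiv.prodAssoc κ (Fin A) (Fin K)).symm := by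
  ext ⟨b, a, k⟩ ⟨b', a', k'⟩
  simp [Matrix.submatrix_apply, Equiv.prodAssoc, mul_assoc]

lemma trace_submatrix_equiv' {m n : Type*} [Fintype m] [Fintype n]
    (e : m ≃ n) (M : Matrix n n ℂ) :
    Matrix.trace (M.submatrix e e) = Matrix.trace M := by
  simp only [Matrix.trace, Matrix.diag, Matrix.submatrix_apply]
  exact Equiv.sum_comp e fun j => M j j

lemma psd_sum' {ι n : Type*} [Fintype ι] [Fintype n] (f : ι → Matrix n n ℂ)
    (h : ∀ i, (f i).PosSemidef) : (∑ i, f i).PosSemidef :=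
  Finset.sum_induction f _ (fun _ _ ha hb => ha.add hb) .zero (fun i _ => h i)

set_option maxHeartbeats 1000000 in
/-- When the covariance matrices factor as `Λ̃ ⊗ I_{N/A}` (with `K = N/A` antennas per
subarray), the quadratic-form trace with the big matrix `Φ_N` equals `N/A` times the
corresponding trace with the reduced matrix `Φ̃`. -/
theorem subarray_trace_scaling
    (B A K M : ℕ) (hK : 0 < K)
    (X : Fin M → Matrix (Fin B) (Fin B) ℂ) (hX : ∀ m, (X m).PosSemidef)
    (lt : Fin A → ℝ) (hlt : ∀ a, 0 ≤ lt a)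
    (ltm : Fin M → Fin A → ℝ) (hltm : ∀ m a, 0 ≤ ltm m a)
    (σ : ℝ) (hσ : 0 < σ)
    (D : Matrix (Fin B) (Fin B) ℂ) (hD : D.IsDiag) (x : Fin B → ℂ) :
    Matrix.trace
        (((rowVecH x * D) ⊗ₖ ((Matrix.diagonal fun a => (lt a : ℂ))
              ⊗ₖ (1 : Matrix (Fin K) (Fin K) ℂ)))
          * ((∑ m, X m ⊗ₖ ((Matrix.diagonal fun a => (ltm m a : ℂ))
                ⊗ₖ (1 : Matrix (Fin K) (Fin K) ℂ)))
              + (σ ^ 2 : ℂ) • (1 : Matrix (Fin B × Fin A × Fin K) (Fin B × Fin A × Fin K) ℂ))⁻¹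
          * ((Dᴴ * colVec x) ⊗ₖ ((Matrix.diagonal fun a => (lt a : ℂ))
              ⊗ₖ (1 : Matrix (Fin K) (Fin K) ℂ))))
      = (K : ℂ) * Matrix.trace
          (((rowVecH x * D) ⊗ₖ (Matrix.diagonal fun a => (lt a : ℂ)))
            * ((∑ m, X m ⊗ₖ (Matrix.diagonal fun a => (ltm m a : ℂ)))
                + (σ ^ 2 : ℂ) • (1 : Matrix (Fin B × Fin A) (Fin B × Fin A) ℂ))⁻¹
            * ((Dᴴ * colVec x) ⊗ₖ (Matrix.diagonal fun a => (lt a : ℂ)))) := by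
  have hpsd : (∑ m, X m ⊗ₖ (Matrix.diagonal fun a => (ltm m a : ℂ))).PosSemidef :=
    psd_sum' _ fun m =>
      psd_kron' (hX m) (Matrix.posSemidef_diagonal_iff.mpr fun a => by
        simpa using Complex.zero_le_real.mpr (hltm m a))
  have hsm : ((σ ^ 2 : ℂ) • (1 : Matrix (Fin B × Fin A) (Fin B × Fin A) ℂ)).PosDef := by
    rw [← Matrix.diagonal_one, ← Matrix.diagonal_smul]
    refine Matrix.posDef_diagonal_iff.mpr fun i => ?_
    simp only [Pi.smul_apply, smul_eq_mul, mul_one]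
    have h2 : (0 : ℝ) < σ ^ 2 := by positivity
    calc (0:ℂ) < ((σ ^ 2 : ℝ) : ℂ) := Complex.zero_lt_real.mpr h2
      _ = (σ : ℂ) ^ 2 := by push_cast; ring
  have hΦpd : ((∑ m, X m ⊗ₖ (Matrix.diagonal fun a => (ltm m a : ℂ)))
      + (σ ^ 2 : ℂ) • (1 : Matrix (Fin B × Fin A) (Fin B × Fin A) ℂ)).PosDef :=
    Matrix.PosDef.posSemidef_add hpsd hsm
  have hΦinv : ((∑ m, X m ⊗ₖ (Matrix.diagonal fun a => (ltm m a : ℂ)))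
        + (σ ^ 2 : ℂ) • (1 : Matrix (Fin B × Fin A) (Fin B × Fin A) ℂ))
      * ((∑ m, X m ⊗ₖ (Matrix.diagonal fun a => (ltm m a : ℂ)))
        + (σ ^ 2 : ℂ) • (1 : Matrix (Fin B × Fin A) (Fin B × Fin A) ℂ))⁻¹ = 1 :=
    Matrix.mul_nonsing_inv _ ((Matrix.isUnit_iff_isUnit_det _).mp hΦpd.isUnit)
  have hΦN :
      ((∑ m, X m ⊗ₖ ((Matrix.diagonal fun a => (ltm m a : ℂ))
            ⊗ₖ (1 : Matrix (Fin K) (Fin K) ℂ)))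
          + (σ ^ 2 : ℂ) • (1 : Matrix (Fin B × Fin A × Fin K) (Fin B × Fin A × Fin K) ℂ))
        = ((((∑ m, X m ⊗ₖ (Matrix.diagonal fun a => (ltm m a : ℂ)))
              + (σ ^ 2 : ℂ) • (1 : Matrix (Fin B × Fin A) (Fin B × Fin A) ℂ))
            ⊗ₖ (1 : Matrix (Fin K) (Fin K) ℂ)).submatrix
            (Equiv.prodAssoc (Fin B) (Fin A) (Fin K)).symm
            (Equiv.prodAssoc (Fin B) (Fin A) (Fin K)).symm) := by
    have hs : (∑ m, X m ⊗ₖ (Matrix.diagonal fun a => (ltm m a : ℂ)))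
        ⊗ₖ (1 : Matrix (Fin K) (Fin K) ℂ)
        = ∑ m, (X m ⊗ₖ (Matrix.diagonal fun a => (ltm m a : ℂ)))
            ⊗ₖ (1 : Matrix (Fin K) (Fin K) ℂ) := by
      ext ⟨⟨b, a⟩, k⟩ ⟨⟨b', a'⟩, k'⟩
      simp [Matrix.sum_apply, Finset.sum_mul]
    rw [Matrix.add_kronecker, Matrix.smul_kronecker, Matrix.one_kronecker_one, hs]
    simp only [Matrix.submatrix_add, Matrix.submatrix_smul, Pi.add_apply, Pi.smul_apply,
      Matrix.submatrix_one_equiv]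
    congr 1
    have h2 : ((∑ m, (X m ⊗ₖ (Matrix.diagonal fun a => (ltm m a : ℂ)))
            ⊗ₖ (1 : Matrix (Fin K) (Fin K) ℂ)).submatrix
            (Equiv.prodAssoc (Fin B) (Fin A) (Fin K)).symm
            (Equiv.prodAssoc (Fin B) (Fin A) (Fin K)).symm)
        = ∑ m, ((X m ⊗ₖ (Matrix.diagonal fun a => (ltm m a : ℂ)))
            ⊗ₖ (1 : Matrix (Fin K) (Fin K) ℂ)).submatrix
            (Equiv.prodAssoc (Fin B) (Fin A) (Fin K)).symm
            (Equiv.prodAssoc (Fin B) (Fin A) (Fin K)).symm := by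
      ext p q
      simp [Matrix.sum_apply, mul_assoc]
    rw [h2]
    exact Finset.sum_congr rfl fun m _ => (kron_one_assoc (X m) _)
  have hinvN : (((((∑ m, X m ⊗ₖ (Matrix.diagonal fun a => (ltm m a : ℂ)))
              + (σ ^ 2 : ℂ) • (1 : Matrix (Fin B × Fin A) (Fin B × Fin A) ℂ))
            ⊗ₖ (1 : Matrix (Fin K) (Fin K) ℂ)).submatrix
            (Equiv.prodAssoc (Fin B) (Fin A) (Fin K)).symm
            (Equiv.prodAssoc (Fin B) (Fin A) (Fin K)).symm))⁻¹
      = ((((∑ m, X m ⊗ₖ (Matrix.diagonal fun a => (ltm m a : ℂ)))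
              + (σ ^ 2 : ℂ) • (1 : Matrix (Fin B × Fin A) (Fin B × Fin A) ℂ))⁻¹
            ⊗ₖ (1 : Matrix (Fin K) (Fin K) ℂ)).submatrix
            (Equiv.prodAssoc (Fin B) (Fin A) (Fin K)).symm
            (Equiv.prodAssoc (Fin B) (Fin A) (Fin K)).symm) := by
    apply Matrix.inv_eq_right_inv
    rw [Matrix.submatrix_mul_equiv, ← Matrix.mul_kronecker_mul, hΦinv, one_mul,
      Matrix.one_kronecker_one, Matrix.submatrix_one_equiv]
  rw [hΦN, hinvN, kron_one_assoc (rowVecH x * D) (Matrix.diagonal fun a => (lt a : ℂ)),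
    kron_one_assoc (Dᴴ * colVec x) (Matrix.diagonal fun a => (lt a : ℂ)),
    Matrix.submatrix_mul_equiv, Matrix.submatrix_mul_equiv,
    trace_submatrix_equiv', ← Matrix.mul_kronecker_mul, ← Matrix.mul_kronecker_mul,
    one_mul, one_mul, Matrix.trace_kronecker, Matrix.trace_one, Fintype.card_fin]
  ring
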